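/- Let k ∈ {−1,0,1}, ε, n ∈ {0,1} with εn = εk = 0, and let a, b : ℝ → (0,∞) be C¹. Define N(t,x,y) = n·a(t)²(F(y,k)+k)² + b(t)² e^{2εx} Σ(y,k)². Then for every fixed (t,x), the regularity quotient tends to 1 on the axis: lim_{y→0⁺} [−(∂N/∂t)² + a(t)^{−2}(∂N/∂x)² + b(t)^{−2}e^{−2εx}(∂N/∂y)²] / (4 N(t,x,y)) = 1. -/

import Mathlib

/-- `Σ(y,k)`: `sin y` for `k = 1`, `y` for `k = 0`, `sinh y` for `k = −1`. -/
noncomputable def Sig (k y : ℝ) : ℝ :=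
  if k = 1 then Real.sin y else if k = 0 then y else Real.sinh y

/-- `F(y,k)`: `−cos y` for `k = 1`, `y²/2` for `k = 0`, `cosh y` for `k = −1`. -/
noncomputable def Ffun (k y : ℝ) : ℝ :=
  if k = 1 then -Real.cos y else if k = 0 then y ^ 2 / 2 else Real.cosh y

/-- Squared norm `N = η₁·η₁ = n a(t)²(F(y,k)+k)² + b(t)² e^{2εx} Σ(y,k)²` of the axial
Killing vector `η₁ = ∂_w + nk∂_x` of the compact LRS metric. -/
noncomputable def Nsq (k ε n : ℝ) (a b : ℝ → ℝ) (t x y : ℝ) : ℝ :=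
  n * (a t) ^ 2 * (Ffun k y + k) ^ 2 +
    (b t) ^ 2 * Real.exp (2 * ε * x) * (Sig k y) ^ 2

open Filter Real Topology

lemma quot_limit (n ε A A' B B' E : ℝ) (hn : 0 ≤ n) (hA : A ≠ 0) (hBE : 0 < B ^ 2 * E)
    (S Sc G : ℝ → ℝ)
    (hS : Tendsto S (nhdsWithin 0 (Set.Ioi 0)) (nhds 0))
    (hSc : Tendsto Sc (nhdsWithin 0 (Set.Ioi 0)) (nhds 1))
    (hr : Tendsto (fun y => G y / S y) (nhdsWithin 0 (Set.Ioi 0)) (nhds 0))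
    (hne : ∀ᶠ y in nhdsWithin 0 (Set.Ioi 0), S y ≠ 0) :
    Tendsto (fun y =>
      (-(2*n*A*A'*(G y)^2 + 2*B*B'*E*(S y)^2)^2
        + (2*ε*B^2*E*(S y)^2)^2 / A^2
        + (2*n*A^2*(G y)*(S y) + 2*B^2*E*(S y)*(Sc y))^2 / (B^2*E))
      / (4*(n*A^2*(G y)^2 + B^2*E*(S y)^2))) (nhdsWithin 0 (Set.Ioi 0)) (nhds 1) := by
  set g : ℝ × ℝ × ℝ → ℝ := fun p =>
    (-(p.1^2*(2*n*A*A'*p.2.2^2 + 2*B*B'*E)^2)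
      + 4*ε^2*B^4*E^2*p.1^2/A^2
      + 4*(n*A^2*p.2.2*p.1 + B^2*E*p.2.1)^2/(B^2*E))
    / (4*(n*A^2*p.2.2^2 + B^2*E)) with hg
  have hden : ∀ r : ℝ, 0 < n*A^2*r^2 + B^2*E := fun r =>
    add_pos_of_nonneg_of_pos (mul_nonneg (mul_nonneg hn (sq_nonneg _)) (sq_nonneg _)) hBE
  have hgc : ContinuousAt g (0, 1, 0) := by
    apply ContinuousAt.div
    · fun_prop (disch := intros; first | exact pow_ne_zero 2 hA | exact hBE.ne')
    · fun_prop
    · simp only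
      intro hcon
      nlinarith [hden 0]
  have hg0 : g (0, 1, 0) = 1 := by
    simp only [hg]
    have hB0 : B ≠ 0 := by rintro rfl; simp at hBE
    have hE0 : E ≠ 0 := by rintro rfl; simp at hBE
    field_simp
    ring
  have hcomp : Tendsto (fun y => (S y, Sc y, G y / S y)) (nhdsWithin 0 (Set.Ioi 0))
      (nhds ((0 : ℝ), (1 : ℝ), (0 : ℝ))) := by
    rw [nhds_prod_eq, nhds_prod_eq]
    exact hS.prodMk (hSc.prodMk hr)
  have key : Tendsto (fun y => g (S y, Sc y, G y / S y)) (nhdsWithin 0 (Set.Ioi 0)) (nhds 1) := by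
    rw [← hg0]
    exact hgc.tendsto.comp hcomp
  refine key.congr' ?_
  filter_upwards [hne] with y hy
  have hG : G y = G y / S y * S y := (div_mul_cancel₀ _ hy).symm
  set s := S y
  set c := Sc y
  set r := G y / S y with hrdef
  rw [hG]
  have h1 := (hden r).ne'
  have h2 : n*A^2*(r*s)^2 + B^2*E*s^2 ≠ 0 := by
    have : n*A^2*(r*s)^2 + B^2*E*s^2 = (n*A^2*r^2 + B^2*E)*s^2 := by ring
    rw [this]
    exact mul_ne_zero h1 (pow_ne_zero 2 hy)
  simp only [hg]
  field_simp
  ring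

/-- the axis `y = 0` is regular: for every fixed `(t,x)`,
`(∇N·∇N)/(4N) = (−(∂_t N)² + a⁻²(∂_x N)² + b⁻²e^{−2εx}(∂_y N)²)/(4N) → 1`
as `y → 0⁺`. -/
theorem axis_regularity (k ε n : ℝ)
    (hk : k = -1 ∨ k = 0 ∨ k = 1) (hε : ε = 0 ∨ ε = 1) (hn : n = 0 ∨ n = 1)
    (hεn : ε * n = 0) (hεk : ε * k = 0)
    (a b : ℝ → ℝ) (ha : ContDiff ℝ 1 a) (hb : ContDiff ℝ 1 b)
    (hapos : ∀ t, 0 < a t) (hbpos : ∀ t, 0 < b t) :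
    ∀ t x : ℝ,
      Filter.Tendsto
        (fun y =>
          (-(deriv (fun s => Nsq k ε n a b s x y) t) ^ 2 +
              (deriv (fun s => Nsq k ε n a b t s y) x) ^ 2 / (a t) ^ 2 +
              (deriv (fun s => Nsq k ε n a b t x s) y) ^ 2 /
                ((b t) ^ 2 * Real.exp (2 * ε * x))) /
            (4 * Nsq k ε n a b t x y))
        (nhdsWithin 0 (Set.Ioi 0)) (nhds 1) := by
  intro t x
  have haD : HasDerivAt a (deriv a t) t := (ha.differentiable one_ne_zero t).hasDerivAt
  have hbD : HasDerivAt b (deriv b t) t := (hb.differentiable one_ne_zero t).hasDerivAt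
  have hn0 : (0:ℝ) ≤ n := by rcases hn with h | h <;> norm_num [h]
  have hE : (0:ℝ) < Real.exp (2*ε*x) := Real.exp_pos _
  have hBE : (0:ℝ) < (b t)^2 * Real.exp (2*ε*x) := mul_pos (pow_pos (hbpos t) 2) hE
  -- derivative in t
  have h1 : ∀ y, deriv (fun s => Nsq k ε n a b s x y) t
      = 2*n*(a t)*(deriv a t)*(Ffun k y + k)^2
        + 2*(b t)*(deriv b t)*Real.exp (2*ε*x)*(Sig k y)^2 := by
    intro y
    have H : HasDerivAt (fun s => Nsq k ε n a b s x y)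
        (n*((2:ℕ)*(a t)^1*deriv a t)*(Ffun k y + k)^2
          + ((2:ℕ)*(b t)^1*deriv b t)*Real.exp (2*ε*x)*(Sig k y)^2) t := by
      simp only [Nsq]
      exact (((haD.pow 2).const_mul n).mul_const _).add
        (((hbD.pow 2).mul_const _).mul_const _)
    rw [H.deriv]
    push_cast
    ring
  -- derivative in x
  have h2 : ∀ y, deriv (fun s => Nsq k ε n a b t s y) x
      = 2*ε*(b t)^2*Real.exp (2*ε*x)*(Sig k y)^2 := by
    intro y
    have hlin : HasDerivAt (fun s : ℝ => 2*ε*s) (2*ε) x := by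
      simpa using (hasDerivAt_id x).const_mul (2*ε)
    have He : HasDerivAt (fun s : ℝ => Real.exp (2*ε*s)) (Real.exp (2*ε*x)*(2*ε)) x := hlin.exp
    have H : HasDerivAt (fun s => Nsq k ε n a b t s y)
        ((b t)^2*(Real.exp (2*ε*x)*(2*ε))*(Sig k y)^2) x := by
      simp only [Nsq]
      exact ((He.const_mul ((b t)^2)).mul_const _).const_add _
    rw [H.deriv]
    ring
  -- per-k data
  obtain ⟨Sc, hd, hS0, hSc1, hr, hne⟩ :
      ∃ Sc : ℝ → ℝ,
        (∀ y, deriv (fun s => Nsq k ε n a b t x s) y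
            = 2*n*(a t)^2*(Ffun k y + k)*(Sig k y)
              + 2*(b t)^2*Real.exp (2*ε*x)*(Sig k y)*(Sc y)) ∧
        Tendsto (Sig k) (nhdsWithin 0 (Set.Ioi 0)) (nhds 0) ∧
        Tendsto Sc (nhdsWithin 0 (Set.Ioi 0)) (nhds 1) ∧
        Tendsto (fun y => (Ffun k y + k) / Sig k y) (nhdsWithin 0 (Set.Ioi 0)) (nhds 0) ∧
        (∀ᶠ y in nhdsWithin 0 (Set.Ioi 0), Sig k y ≠ 0) := by
    have hpos : ∀ᶠ y in nhdsWithin (0:ℝ) (Set.Ioi 0), 0 < y := self_mem_nhdsWithin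
    rcases hk with hk | hk | hk <;> subst hk
    · -- k = -1
      have hSig : Sig (-1) = Real.sinh := by funext y; simp only [Sig]; norm_num
      have hF : Ffun (-1) = Real.cosh := by funext y; simp only [Ffun]; norm_num
      refine ⟨Real.cosh, ?_, ?_, ?_, ?_, ?_⟩
      · intro y
        have heq : (fun s => Nsq (-1) ε n a b t x s)
            = fun s => n*(a t)^2*(Real.cosh s + -1)^2
                + (b t)^2*Real.exp (2*ε*x)*(Real.sinh s)^2 := by
          funext s; simp only [Nsq, hSig, hF]
        have H : HasDerivAt (fun s => n*(a t)^2*(Real.cosh s + -1)^2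
              + (b t)^2*Real.exp (2*ε*x)*(Real.sinh s)^2)
            (n*(a t)^2*((2:ℕ)*(Real.cosh y + -1)^1*Real.sinh y)
              + (b t)^2*Real.exp (2*ε*x)*((2:ℕ)*(Real.sinh y)^1*Real.cosh y)) y :=
          ((((Real.hasDerivAt_cosh y).add_const (-1)).pow 2).const_mul _).add
            (((Real.hasDerivAt_sinh y).pow 2).const_mul _)
        rw [heq, H.deriv, hSig, hF]
        push_cast
        ring
      · rw [hSig]
        simpa using (Real.continuous_sinh.tendsto 0).mono_left nhdsWithin_le_nhds
      · simpa using (Real.continuous_cosh.tendsto 0).mono_left nhdsWithin_le_nhds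
      · rw [hSig, hF]
        have hlim : Tendsto (fun y => Real.sinh y / (Real.cosh y + 1))
            (nhdsWithin 0 (Set.Ioi 0)) (nhds 0) := by
          have h1 : Tendsto (fun y => Real.sinh y / (Real.cosh y + 1)) (nhds 0)
              (nhds (Real.sinh 0 / (Real.cosh 0 + 1))) := by
            apply Tendsto.div (Real.continuous_sinh.tendsto 0)
              ((Real.continuous_cosh.tendsto 0).add tendsto_const_nhds)
            norm_num
          simpa using h1.mono_left nhdsWithin_le_nhds
        refine hlim.congr' ?_
        filter_upwards [hpos] with y hy
        have hs : Real.sinh y ≠ 0 := (Real.sinh_pos_iff.mpr hy).ne'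
        have hc : Real.cosh y + 1 ≠ 0 := by positivity
        rw [div_eq_div_iff hc hs]
        nlinarith [Real.cosh_sq_sub_sinh_sq y]
      · rw [hSig]
        filter_upwards [hpos] with y hy
        exact (Real.sinh_pos_iff.mpr hy).ne'
    · -- k = 0
      have hSig : Sig 0 = fun y => y := by funext y; simp only [Sig]; norm_num
      have hF : Ffun 0 = fun y => y^2/2 := by funext y; simp only [Ffun]; norm_num
      refine ⟨fun _ => 1, ?_, ?_, ?_, ?_, ?_⟩
      · intro y
        have heq : (fun s => Nsq 0 ε n a b t x s)
            = fun s => n*(a t)^2*(s^2/2 + 0)^2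
                + (b t)^2*Real.exp (2*ε*x)*s^2 := by
          funext s; simp only [Nsq, hSig, hF]
        have H : HasDerivAt (fun s : ℝ => n*(a t)^2*(s^2/2 + 0)^2
              + (b t)^2*Real.exp (2*ε*x)*s^2)
            (n*(a t)^2*((2:ℕ)*(y^2/2 + 0)^1*((2:ℕ)*y^(2-1)/2))
              + (b t)^2*Real.exp (2*ε*x)*((2:ℕ)*y^(2-1))) y :=
          (((((hasDerivAt_pow 2 y).div_const 2).add_const 0).pow 2).const_mul _).add
            ((hasDerivAt_pow 2 y).const_mul _)
        rw [heq, H.deriv, hSig, hF]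
        push_cast
        ring
      · rw [hSig]
        simpa using (continuous_id'.tendsto (0:ℝ)).mono_left nhdsWithin_le_nhds
      · exact tendsto_const_nhds
      · rw [hSig, hF]
        have hlim : Tendsto (fun y : ℝ => y / 2) (nhdsWithin 0 (Set.Ioi 0)) (nhds 0) := by
          have h1 : Tendsto (fun y : ℝ => y / 2) (nhds 0) (nhds ((0:ℝ)/2)) :=
            (continuous_id.div_const 2).tendsto 0
          simpa using h1.mono_left nhdsWithin_le_nhds
        refine hlim.congr' ?_
        filter_upwards [hpos] with y hy
        field_simp
        ring
      · rw [hSig]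
        filter_upwards [hpos] with y hy
        exact hy.ne'
    · -- k = 1
      have hSig : Sig 1 = Real.sin := by funext y; simp only [Sig]; norm_num
      have hF : Ffun 1 = fun y => -Real.cos y := by funext y; simp only [Ffun]; norm_num
      have hIoo : Set.Ioo (0:ℝ) 1 ∈ nhdsWithin (0:ℝ) (Set.Ioi 0) :=
        Ioo_mem_nhdsGT_of_mem (Set.left_mem_Ico.mpr one_pos)
      have hsinpos : ∀ᶠ y in nhdsWithin (0:ℝ) (Set.Ioi 0), 0 < Real.sin y := by
        filter_upwards [hIoo] with y hy
        exact Real.sin_pos_of_pos_of_lt_pi hy.1 (hy.2.trans (by linarith [Real.pi_gt_three]))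
      refine ⟨Real.cos, ?_, ?_, ?_, ?_, ?_⟩
      · intro y
        have heq : (fun s => Nsq 1 ε n a b t x s)
            = fun s => n*(a t)^2*(-Real.cos s + 1)^2
                + (b t)^2*Real.exp (2*ε*x)*(Real.sin s)^2 := by
          funext s; simp only [Nsq, hSig, hF]
        have H : HasDerivAt (fun s => n*(a t)^2*(-Real.cos s + 1)^2
              + (b t)^2*Real.exp (2*ε*x)*(Real.sin s)^2)
            (n*(a t)^2*((2:ℕ)*(-Real.cos y + 1)^1*(-(-Real.sin y)))
              + (b t)^2*Real.exp (2*ε*x)*((2:ℕ)*(Real.sin y)^1*Real.cos y)) y :=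
          (((((Real.hasDerivAt_cos y).neg).add_const 1).pow 2).const_mul _).add
            (((Real.hasDerivAt_sin y).pow 2).const_mul _)
        rw [heq, H.deriv, hSig, hF]
        push_cast
        ring
      · rw [hSig]
        simpa using (Real.continuous_sin.tendsto 0).mono_left nhdsWithin_le_nhds
      · simpa using (Real.continuous_cos.tendsto 0).mono_left nhdsWithin_le_nhds
      · rw [hSig, hF]
        have hlim : Tendsto (fun y => Real.sin y / (1 + Real.cos y))
            (nhdsWithin 0 (Set.Ioi 0)) (nhds 0) := by
          have h1 : Tendsto (fun y => Real.sin y / (1 + Real.cos y)) (nhds 0)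
              (nhds (Real.sin 0 / (1 + Real.cos 0))) := by
            apply Tendsto.div (Real.continuous_sin.tendsto 0)
              (tendsto_const_nhds.add (Real.continuous_cos.tendsto 0))
            norm_num
          simpa using h1.mono_left nhdsWithin_le_nhds
        refine hlim.congr' ?_
        filter_upwards [hsinpos] with y hy
        have hs : Real.sin y ≠ 0 := hy.ne'
        have hc : 1 + Real.cos y ≠ 0 := by
          nlinarith [Real.sin_sq_add_cos_sq y, Real.neg_one_le_cos y]
        rw [div_eq_div_iff hc hs]
        nlinarith [Real.sin_sq_add_cos_sq y]
      · rw [hSig]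
        filter_upwards [hsinpos] with y hy
        exact hy.ne'
  -- assemble
  have main := quot_limit n ε (a t) (deriv a t) (b t) (deriv b t) (Real.exp (2*ε*x))
    hn0 (hapos t).ne' hBE (Sig k) Sc (fun y => Ffun k y + k) hS0 hSc1 hr hne
  refine main.congr fun y => ?_
  rw [h1 y, h2 y, hd y]
  simp only [Nsq]
  try ring
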